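/- arXiv:1401.2065 — 4 statements merged into one kernel-verified Lean document; each statement's English description precedes it below -/
import Mathlib

section
/- A binary pattern query (i, j) with 1 ≤ i ≤ n has a jumbled occurrence in binary string S (i.e., some length-i substring of S has exactly j ones) if and only if m(i) ≤ j ≤ M(i), where m(i) and M(i) are respectively the minimum and maximum number of ones over all length-i substrings of S. -/
/-- Number of positions `k ∈ [p, p+i)` with `S k = true`. -/
def ones (S : ℕ → Bool) (p i : ℕ) : ℕ :=
  ((Finset.Ico p (p + i)).filter fun k => S k = true).card

lemma ones_step (S : ℕ → Bool) (p i : ℕ) :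
    ones S p i ≤ ones S (p+1) i + 1 ∧ ones S (p+1) i ≤ ones S p i + 1 := by
  classical
  set P : ℕ → Prop := fun k => S k = true with hP
  set T := (Finset.Ico (p+1) (p+i)).filter P with hT
  have h1 : (Finset.Ico p (p+i)).filter P ⊆ insert p T := by
    intro k hk
    simp only [Finset.mem_filter, Finset.mem_Ico] at hk
    rcases eq_or_ne k p with rfl | hne
    · exact Finset.mem_insert_self _ _
    · refine Finset.mem_insert_of_mem ?_
      simp only [hT, Finset.mem_filter, Finset.mem_Ico]
      exact ⟨⟨Nat.lt_of_le_of_ne hk.1.1 (Ne.symm hne), hk.1.2⟩, hk.2⟩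
  have h2 : T ⊆ (Finset.Ico (p+1) (p+1+i)).filter P := by
    intro k hk
    simp only [hT, Finset.mem_filter, Finset.mem_Ico] at hk ⊢
    exact ⟨⟨hk.1.1, by omega⟩, hk.2⟩
  have h3 : (Finset.Ico (p+1) (p+1+i)).filter P ⊆ insert (p+i) T := by
    intro k hk
    simp only [Finset.mem_filter, Finset.mem_Ico] at hk
    rcases eq_or_ne k (p+i) with rfl | hne
    · exact Finset.mem_insert_self _ _
    · refine Finset.mem_insert_of_mem ?_
      simp only [hT, Finset.mem_filter, Finset.mem_Ico]
      exact ⟨⟨hk.1.1, by omega⟩, hk.2⟩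
  have h4 : T ⊆ (Finset.Ico p (p+i)).filter P := by
    intro k hk
    simp only [hT, Finset.mem_filter, Finset.mem_Ico] at hk ⊢
    exact ⟨⟨by omega, hk.1.2⟩, hk.2⟩
  have c1 := Finset.card_le_card h1
  have c2 := Finset.card_le_card h2
  have c3 := Finset.card_le_card h3
  have c4 := Finset.card_le_card h4
  have ci : (insert p T).card ≤ T.card + 1 := Finset.card_insert_le _ _
  have ci2 : (insert (p+i) T).card ≤ T.card + 1 := Finset.card_insert_le _ _
  constructor
  · unfold ones; simp only [← hP]; omega
  · unfold ones; simp only [← hP]; omega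

lemma ivt_up (f : ℕ → ℕ) (hf : ∀ k, f (k+1) ≤ f k + 1 ∧ f k ≤ f (k+1) + 1)
    (a b j : ℕ) (hab : a ≤ b) (h1 : f a ≤ j) (h2 : j ≤ f b) :
    ∃ k, a ≤ k ∧ k ≤ b ∧ f k = j := by
  induction b, hab using Nat.le_induction with
  | base => exact ⟨a, le_refl _, le_refl _, le_antisymm h1 h2⟩
  | succ b hab ih =>
    by_cases h : j ≤ f b
    · obtain ⟨k, hk1, hk2, hk3⟩ := ih h
      exact ⟨k, hk1, by omega, hk3⟩
    · have := (hf b).1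
      exact ⟨b+1, by omega, le_refl _, by omega⟩

lemma ivt_down (f : ℕ → ℕ) (hf : ∀ k, f (k+1) ≤ f k + 1 ∧ f k ≤ f (k+1) + 1)
    (a b j : ℕ) (hab : a ≤ b) (h1 : f b ≤ j) (h2 : j ≤ f a) :
    ∃ k, a ≤ k ∧ k ≤ b ∧ f k = j := by
  induction b, hab using Nat.le_induction with
  | base => exact ⟨a, le_refl _, le_refl _, le_antisymm h1 h2⟩
  | succ b hab ih =>
    by_cases h : f b ≤ j
    · obtain ⟨k, hk1, hk2, hk3⟩ := ih h
      exact ⟨k, hk1, by omega, hk3⟩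
    · have := (hf b).2
      exact ⟨b+1, by omega, le_refl _, by omega⟩

theorem stmt_2 (n i j : ℕ) (S : ℕ → Bool) (h1 : 1 ≤ i) (h2 : i ≤ n) :
    (∃ p, p + i ≤ n ∧ ones S p i = j) ↔
      ((Finset.range (n - i + 1)).image fun p => ones S p i).min'
          (Finset.Nonempty.image (Finset.nonempty_range_iff.mpr (Nat.succ_ne_zero _)) _) ≤ j ∧
      j ≤ ((Finset.range (n - i + 1)).image fun p => ones S p i).max'
          (Finset.Nonempty.image (Finset.nonempty_range_iff.mpr (Nat.succ_ne_zero _)) _) := by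
  set F := (Finset.range (n - i + 1)).image fun p => ones S p i with hF
  have hmem : ∀ p, p + i ≤ n → ones S p i ∈ F := by
    intro p hp
    exact Finset.mem_image_of_mem _ (Finset.mem_range.mpr (by omega))
  constructor
  · rintro ⟨p, hp, rfl⟩
    exact ⟨Finset.min'_le _ _ (hmem p hp), Finset.le_max' _ _ (hmem p hp)⟩
  · rintro ⟨hmin, hmax⟩
    have hne : F.Nonempty :=
      Finset.Nonempty.image (Finset.nonempty_range_iff.mpr (Nat.succ_ne_zero _)) _
    obtain ⟨p₀, hp₀, hfp₀⟩ := Finset.mem_image.mp (F.min'_mem hne)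
    obtain ⟨p₁, hp₁, hfp₁⟩ := Finset.mem_image.mp (F.max'_mem hne)
    rw [Finset.mem_range] at hp₀ hp₁
    have hf : ∀ k, ones S (k+1) i ≤ ones S k i + 1 ∧ ones S k i ≤ ones S (k+1) i + 1 :=
      fun k => ⟨(ones_step S k i).2, (ones_step S k i).1⟩
    rcases le_or_gt p₀ p₁ with h | h
    · obtain ⟨k, hk1, hk2, hk3⟩ := ivt_up (fun p => ones S p i) hf p₀ p₁ j h
        (by simpa only [hfp₀] using hmin) (by simpa only [hfp₁] using hmax)
      exact ⟨k, by omega, hk3⟩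
    · obtain ⟨k, hk1, hk2, hk3⟩ := ivt_down (fun p => ones S p i) hf p₁ p₀ j (le_of_lt h)
        (by simpa only [hfp₀] using hmin) (by simpa only [hfp₁] using hmax)
      exact ⟨k, by omega, hk3⟩
end

section
/- Adjacent-exchange lemma for connected subtrees: let T be a finite tree and U a connected vertex subset of size i ≥ 1 with i < |V(T)|. Then there exists a connected vertex subset U' of size i such that |U Δ U'| = 2 (U' is obtained from U by removing one vertex and adding one vertex) and U' is connected, and moreover the multiset of such moves connects any two connected i-subsets: any two connected vertex subsets of the same size i can be joined by a sequence of connected i-subsets in which consecutive sets differ in exactly one exchanged vertex. -/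
open Finset SimpleGraph Relation

section Helpers

variable {V : Type*} [Fintype V] [DecidableEq V] {T : SimpleGraph V}

private lemma reach_center {A : Set V} {v : V} (hv : v ∈ A) :
    ∀ {y : V} (p : T.Walk y v) (hs : ∀ z ∈ p.support, z ∈ A),
      (T.induce A).Reachable ⟨y, hs y p.start_mem_support⟩ ⟨v, hv⟩ := by
  intro y p
  induction p with
  | nil => intro _; exact Reachable.refl _
  | @cons a b c h q ih =>
      intro hs
      have hb : b ∈ A := hs b (by simp [SimpleGraph.Walk.support_cons])
      have ha : (T.induce A).Adj ⟨a, hs a (SimpleGraph.Walk.start_mem_support _)⟩ ⟨b, hb⟩ := by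
        simpa using h
      exact (ha.reachable).trans
        (ih hv fun z hz => hs z (by simp [SimpleGraph.Walk.support_cons]; exact Or.inr hz))

private lemma conn_of_walks {A : Set V} {v : V} (hv : v ∈ A)
    (H : ∀ y ∈ A, ∃ p : T.Walk y v, ∀ z ∈ p.support, z ∈ A) :
    (T.induce A).Connected := by
  rw [connected_iff]
  refine ⟨fun a b => ?_, ⟨⟨v, hv⟩⟩⟩
  obtain ⟨p, hp⟩ := H a a.2
  obtain ⟨q, hq⟩ := H b b.2
  exact (reach_center hv p hp).trans (reach_center hv q hq).symm

private lemma walk_of_conn {A : Set V} (h : (T.induce A).Connected)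
    {y v : V} (hy : y ∈ A) (hv : v ∈ A) :
    ∃ p : T.Walk y v, ∀ z ∈ p.support, z ∈ A := by
  obtain ⟨q⟩ := h ⟨y, hy⟩ ⟨v, hv⟩
  refine ⟨q.map (SimpleGraph.Embedding.induce A).toHom, ?_⟩
  intro z hz
  replace hz : z ∈ (q.map (SimpleGraph.Embedding.induce A).toHom).support := hz
  rw [SimpleGraph.Walk.support_map, List.mem_map] at hz
  obtain ⟨a, -, rfl⟩ := hz
  exact a.2

private lemma path_mem (hT : T.IsTree) {A : Set V} (hA : (T.induce A).Connected)
    {u w : V} (hu : u ∈ A) (hw : w ∈ A) {p : T.Walk u w} (hp : p.IsPath) :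
    ∀ z ∈ p.support, z ∈ A := by
  obtain ⟨q, hq⟩ := walk_of_conn hA hu hw
  obtain ⟨r, -, hru⟩ := hT.existsUnique_path u w
  have h1 : p = r := hru p hp
  have h2 : q.bypass = r := hru q.bypass q.bypass_isPath
  intro z hz
  have hz' : z ∈ q.bypass.support := by rw [h2, ← h1]; exact hz
  exact hq z (q.support_bypass_subset hz')

private lemma path_length (hT : T.IsTree) {u w : V} {p : T.Walk u w} (hp : p.IsPath) :
    p.length = T.dist u w := by
  obtain ⟨q, hq⟩ := hT.isConnected.exists_walk_length_eq_dist u w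
  obtain ⟨r, -, hru⟩ := hT.existsUnique_path u w
  have h1 : p = r := hru p hp
  have h2 : q.bypass = r := hru q.bypass q.bypass_isPath
  have hle : q.bypass.length ≤ T.dist u w := hq ▸ q.length_bypass_le
  have hge : T.dist u w ≤ q.bypass.length := SimpleGraph.dist_le _
  rw [h1, ← h2]; omega

private lemma dist_split (hT : T.IsTree) {u w x : V} {p : T.Walk u w} (hp : p.IsPath)
    (hx : x ∈ p.support) : T.dist u w = T.dist u x + T.dist x w := by
  have h1 : (p.takeUntil x hx).length = T.dist u x := path_length hT (hp.takeUntil hx)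
  have h2 : (p.dropUntil x hx).length = T.dist x w := path_length hT (hp.dropUntil hx)
  have h0 : p.length = T.dist u w := path_length hT hp
  have h3 := congrArg SimpleGraph.Walk.length (p.take_spec hx)
  rw [SimpleGraph.Walk.length_append] at h3
  omega

private lemma crossing {U : Finset V} :
    ∀ {a b : V} (p : T.Walk a b), a ∈ U → b ∉ U →
      ∃ s t, s ∈ U ∧ t ∉ U ∧ t ∈ p.support ∧ T.Adj s t := by
  intro a b p
  induction p with
  | nil => intro ha hb; exact absurd ha hb
  | @cons a c b h q ih =>
      intro ha hb
      by_cases hc : c ∈ U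
      · obtain ⟨s, t, h1, h2, h3, h4⟩ := ih hc hb
        exact ⟨s, t, h1, h2, by simp [SimpleGraph.Walk.support_cons]; right; exact h3, h4⟩
      · exact ⟨a, c, ha, hc, by simp [SimpleGraph.Walk.support_cons], h⟩

private lemma insert_conn {U : Finset V} (hU : (T.induce (U : Set V)).Connected)
    {u v : V} (hu : u ∈ U) (huv : T.Adj u v) :
    (T.induce ((insert v U : Finset V) : Set V)).Connected := by
  apply conn_of_walks (v := u) (by simp [hu])
  intro y hy
  simp only [Finset.coe_insert, Set.mem_insert_iff, Finset.mem_coe] at hy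
  rcases hy with rfl | hy
  · refine ⟨SimpleGraph.Walk.cons huv.symm SimpleGraph.Walk.nil, ?_⟩
    intro z hz
    simp only [SimpleGraph.Walk.support_cons, SimpleGraph.Walk.support_nil,
      List.mem_cons, List.mem_singleton] at hz
    rcases hz with rfl | hz
    · simp
    · simp at hz; subst hz; simp [hu]
  · obtain ⟨p, hp⟩ := walk_of_conn hU (Finset.mem_coe.mpr hy) (Finset.mem_coe.mpr hu)
    refine ⟨p, fun z hz => ?_⟩
    have := hp z hz
    simp only [Finset.mem_coe] at this
    simp [this]

private lemma erase_conn (hT : T.IsTree) {S B : Finset V} {v : V}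
    (hS : (T.induce (S : Set V)).Connected) (hv : v ∈ S) (hB : B ⊆ S)
    (hBne : B.Nonempty) (hvB : v ∉ B)
    (Hsafe : ∀ y ∈ S, y ∉ B → ∃ p : T.Walk y v, ∀ z ∈ p.support, z ∈ S ∧ z ∉ B) :
    ∃ x ∈ B, (T.induce ((S.erase x : Finset V) : Set V)).Connected := by
  obtain ⟨x, hxB, hmax⟩ := Finset.exists_max_image B (fun b => T.dist b v) hBne
  refine ⟨x, hxB, ?_⟩
  have hvx : v ≠ x := fun h => hvB (h ▸ hxB)
  apply conn_of_walks (v := v)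
    (show v ∈ ((S.erase x : Finset V) : Set V) by simp [Finset.mem_erase, hvx, hv])
  intro y hy
  rw [Finset.mem_coe, Finset.mem_erase] at hy
  obtain ⟨hyx, hyS⟩ := hy
  by_cases hyB : y ∈ B
  · obtain ⟨q, hq⟩ := walk_of_conn hS (Finset.mem_coe.mpr hyS) (Finset.mem_coe.mpr hv)
    refine ⟨q.bypass, ?_⟩
    have hxns : x ∉ q.bypass.support := by
      intro hxs
      have hsplit := dist_split hT q.bypass_isPath hxs
      have hpos : 0 < T.dist y x := hT.isConnected.pos_dist_of_ne hyx
      have hle := hmax y hyB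
      omega
    intro z hz
    have hzS : z ∈ (S : Set V) := hq z (q.support_bypass_subset hz)
    have hzx : z ≠ x := fun h => hxns (h ▸ hz)
    simp only [Finset.coe_erase, Set.mem_diff, Set.mem_singleton_iff]
    exact ⟨hzS, hzx⟩
  · obtain ⟨p, hp⟩ := Hsafe y hyS hyB
    refine ⟨p, fun z hz => ?_⟩
    obtain ⟨h1, h2⟩ := hp z hz
    have hzx : z ≠ x := fun h => h2 (h ▸ hxB)
    simp only [Finset.coe_erase, Set.mem_diff, Set.mem_singleton_iff, Finset.mem_coe]
    exact ⟨h1, hzx⟩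

private lemma symmDiff_card_two {U : Finset V} {v x : V} (hv : v ∉ U) (hx : x ∈ U) :
    (symmDiff U ((insert v U).erase x)).card = 2 := by
  have hxv : x ≠ v := fun h => hv (h ▸ hx)
  have hset : symmDiff U ((insert v U).erase x) = {x, v} := by
    ext a
    simp only [symmDiff_def, Finset.sup_eq_union, Finset.mem_union, Finset.mem_sdiff,
      Finset.mem_erase, Finset.mem_insert, Finset.mem_singleton]
    constructor
    · rintro (⟨haU, h⟩ | ⟨⟨hax, h⟩, haU⟩)
      · by_cases hax : a = x
        · exact Or.inl hax
        · exact absurd ⟨hax, Or.inr haU⟩ h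
      · rcases h with rfl | h
        · exact Or.inr rfl
        · exact absurd h haU
    · rintro (rfl | rfl)
      · exact Or.inl ⟨hx, fun hc => hc.1 rfl⟩
      · exact Or.inr ⟨⟨hxv.symm, Or.inl rfl⟩, hv⟩
  rw [hset, Finset.card_pair hxv]

private lemma symmDiff_card_disj {A W : Finset V} (h : ∀ a ∈ A, a ∉ W) :
    (symmDiff A W).card = A.card + W.card := by
  have h1 : symmDiff A W = A ∪ W := by
    ext a
    simp only [symmDiff_def, Finset.sup_eq_union, Finset.mem_union, Finset.mem_sdiff]
    constructor
    · rintro (⟨h1, -⟩ | ⟨h1, -⟩) <;> [exact Or.inl h1; exact Or.inr h1]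
    · rintro (h1 | h1)
      · exact Or.inl ⟨h1, h a h1⟩
      · right; refine ⟨h1, fun hA => h a hA h1⟩
  rw [h1, Finset.card_union_of_disjoint (Finset.disjoint_left.mpr h)]

end Helpers

section Main

variable {V : Type*} [Fintype V] [DecidableEq V] {T : SimpleGraph V}

private lemma step_lemma (hT : T.IsTree) {i : ℕ}
    {U W : Finset V} (hUc : (T.induce (U : Set V)).Connected) (hUi : U.card = i)
    (hWc : (T.induce (W : Set V)).Connected) (hWi : W.card = i)
    (hiU : U.Nonempty) (hiW : W.Nonempty) (hne : U ≠ W) :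
    ∃ U' : Finset V, (T.induce (U' : Set V)).Connected ∧ U'.card = i ∧
      (symmDiff U U').card = 2 ∧
      sInf {n | ∃ a ∈ U', ∃ w ∈ W, T.dist a w = n} + (symmDiff U' W).card
        < sInf {n | ∃ a ∈ U, ∃ w ∈ W, T.dist a w = n} + (symmDiff U W).card := by
  classical
  have hUsub : ∃ x ∈ U, x ∉ W := by
    by_contra h
    push_neg at h
    exact hne (Finset.eq_of_subset_of_card_le (fun a ha => h a ha) (by omega))
  have hWsub : ∃ x ∈ W, x ∉ U := by
    by_contra h
    push_neg at h
    exact hne (Finset.eq_of_subset_of_card_le (fun a ha => h a ha) (by omega)).symm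
  by_cases hA : ∃ v, v ∈ W ∧ v ∉ U ∧ ∃ u ∈ U, T.Adj u v
  · obtain ⟨v, hvW, hvU, u, huU, hadj⟩ := hA
    have hS : (T.induce ((insert v U : Finset V) : Set V)).Connected :=
      insert_conn hUc huU hadj
    obtain ⟨x0, hx0U, hx0W⟩ := hUsub
    have hBne : ((insert v U) \ W).Nonempty :=
      ⟨x0, Finset.mem_sdiff.mpr ⟨Finset.mem_insert_of_mem hx0U, hx0W⟩⟩
    have hsafeA : ∀ y ∈ insert v U, y ∉ (insert v U) \ W →
        ∃ p : T.Walk y v, ∀ z ∈ p.support, z ∈ insert v U ∧ z ∉ (insert v U) \ W := by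
      intro y hyS hyB
      have hyW : y ∈ W := by
        by_contra hyW
        exact hyB (Finset.mem_sdiff.mpr ⟨hyS, hyW⟩)
      obtain ⟨q⟩ := hT.isConnected.preconnected y v
      refine ⟨q.bypass, fun z hz => ?_⟩
      have hzS : z ∈ ((insert v U : Finset V) : Set V) :=
        path_mem hT hS (Finset.mem_coe.mpr hyS) (Finset.mem_coe.mpr (Finset.mem_insert_self v U))
          q.bypass_isPath z hz
      have hzW : z ∈ (W : Set V) :=
        path_mem hT hWc (Finset.mem_coe.mpr hyW) (Finset.mem_coe.mpr hvW) q.bypass_isPath z hz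
      rw [Finset.mem_coe] at hzS hzW
      exact ⟨hzS, fun hc => (Finset.mem_sdiff.mp hc).2 hzW⟩
    obtain ⟨x, hxB, hconn'⟩ := erase_conn hT hS (Finset.mem_insert_self v U)
      (Finset.sdiff_subset) hBne (fun h => (Finset.mem_sdiff.mp h).2 hvW) hsafeA
    obtain ⟨hxS', hxW⟩ := Finset.mem_sdiff.mp hxB
    have hxv : x ≠ v := fun h => hxW (h ▸ hvW)
    have hxU : x ∈ U := by
      rcases Finset.mem_insert.mp hxS' with h | h
      · exact absurd h hxv
      · exact h
    refine ⟨(insert v U).erase x, hconn', ?_, symmDiff_card_two hvU hxU, ?_⟩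
    · rw [Finset.card_erase_of_mem hxS', Finset.card_insert_of_notMem hvU, hUi]
      omega
    · have hvU' : v ∈ (insert v U).erase x :=
        Finset.mem_erase.mpr ⟨fun h => hxv h.symm, Finset.mem_insert_self v U⟩
      have hd0 : sInf {n | ∃ a ∈ (insert v U).erase x, ∃ w ∈ W, T.dist a w = n} = 0 :=
        Nat.eq_zero_of_le_zero (Nat.sInf_le ⟨v, hvU', v, hvW, SimpleGraph.dist_self⟩)
      have hsub : symmDiff ((insert v U).erase x) W ⊆ (symmDiff U W).erase x := by
        intro a ha
        rw [symmDiff_def, Finset.sup_eq_union, Finset.mem_union, Finset.mem_sdiff,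
          Finset.mem_sdiff, Finset.mem_erase, Finset.mem_insert] at ha
        rw [Finset.mem_erase, symmDiff_def, Finset.sup_eq_union, Finset.mem_union,
          Finset.mem_sdiff, Finset.mem_sdiff]
        rcases ha with ⟨⟨hax, h⟩, haW⟩ | ⟨haW, h⟩
        · rcases h with rfl | haU
          · exact absurd hvW haW
          · exact ⟨hax, Or.inl ⟨haU, haW⟩⟩
        · refine ⟨fun hax => hxW (by rwa [hax] at haW), Or.inr ⟨haW, fun haU => ?_⟩⟩
          exact h ⟨fun hax => hxW (by rwa [hax] at haW), Or.inr haU⟩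
      have hxmem : x ∈ symmDiff U W := by
        rw [symmDiff_def, Finset.sup_eq_union, Finset.mem_union, Finset.mem_sdiff]
        exact Or.inl ⟨hxU, hxW⟩
      have hlt : (symmDiff ((insert v U).erase x) W).card < (symmDiff U W).card := by
        have h1 := Finset.card_le_card hsub
        have h2 := Finset.card_erase_of_mem hxmem
        have h3 := Finset.card_pos.mpr ⟨x, hxmem⟩
        omega
      omega
  · push_neg at hA
    obtain ⟨u0, hu0⟩ := hiU
    obtain ⟨w1, hw1W, hw1U⟩ := hWsub
    have hdisj : ∀ a ∈ U, a ∉ W := by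
      intro a haU haW
      obtain ⟨p, hp⟩ := walk_of_conn hWc (Finset.mem_coe.mpr haW) (Finset.mem_coe.mpr hw1W)
      obtain ⟨s, t, hsU, htU, hts, hst⟩ := crossing p haU hw1U
      exact hA t (Finset.mem_coe.mp (hp t hts)) htU s hsU hst
    set P := {n | ∃ a ∈ U, ∃ w ∈ W, T.dist a w = n} with hP
    have hPne : P.Nonempty := ⟨T.dist u0 w1, u0, hu0, w1, hw1W, rfl⟩
    obtain ⟨u, huU, w, hwW, hdist⟩ := Nat.sInf_mem hPne
    set d := sInf P with hd
    have hd2 : 2 ≤ d := by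
      by_contra h
      push_neg at h
      interval_cases d
      · have huw : u = w := (hT.isConnected.dist_eq_zero_iff).mp hdist
        have huW : u ∈ W := by rw [huw]; exact hwW
        exact hdisj u huU huW
      · have hadj : T.Adj u w := SimpleGraph.dist_eq_one_iff_adj.mp hdist
        have hwU : w ∉ U := fun hc => hdisj w hc hwW
        exact hA w hwW hwU u huU hadj
    obtain ⟨q, hq⟩ := hT.isConnected.exists_walk_length_eq_dist u w
    cases q with
    | nil => simp only [SimpleGraph.Walk.length_nil] at hq; omega
    | @cons _ c _ hadj q' =>
      rw [SimpleGraph.Walk.length_cons] at hq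
      have hcw : T.dist c w ≤ d - 1 := by
        have := SimpleGraph.dist_le q'
        omega
      have hcU : c ∉ U := by
        intro hc
        have : d ≤ T.dist c w := Nat.sInf_le ⟨c, hc, w, hwW, rfl⟩
        omega
      have hcW : c ∉ W := fun hc => hA c hc hcU u huU hadj
      have hS : (T.induce ((insert c U : Finset V) : Set V)).Connected :=
        insert_conn hUc huU hadj
      have hsafeB : ∀ y ∈ insert c U, y ∉ U →
          ∃ p : T.Walk y c, ∀ z ∈ p.support, z ∈ insert c U ∧ z ∉ U := by
        intro y hyS hyU
        have hyc : y = c := by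
          rcases Finset.mem_insert.mp hyS with h | h
          · exact h
          · exact absurd h hyU
        subst hyc
        exact ⟨SimpleGraph.Walk.nil, fun z hz => by
          simp only [SimpleGraph.Walk.support_nil, List.mem_singleton] at hz
          subst hz
          exact ⟨Finset.mem_insert_self _ _, hcU⟩⟩
      obtain ⟨x, hxU, hconn'⟩ := erase_conn hT hS (Finset.mem_insert_self c U)
        (Finset.subset_insert c U) ⟨u0, hu0⟩ hcU hsafeB
      have hxS : x ∈ insert c U := Finset.mem_insert_of_mem hxU
      refine ⟨(insert c U).erase x, hconn', ?_, symmDiff_card_two hcU hxU, ?_⟩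
      · rw [Finset.card_erase_of_mem hxS, Finset.card_insert_of_notMem hcU, hUi]
        omega
      · have hcU' : c ∈ (insert c U).erase x :=
          Finset.mem_erase.mpr ⟨fun h => hcU (h ▸ hxU), Finset.mem_insert_self c U⟩
        have hd' : sInf {n | ∃ a ∈ (insert c U).erase x, ∃ w ∈ W, T.dist a w = n} ≤ d - 1 :=
          le_trans (Nat.sInf_le ⟨c, hcU', w, hwW, rfl⟩) hcw
        have hdisj' : ∀ a ∈ (insert c U).erase x, a ∉ W := by
          intro a ha
          rcases Finset.mem_insert.mp (Finset.mem_of_mem_erase ha) with rfl | h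
          · exact hcW
          · exact hdisj a h
        have hcard' : ((insert c U).erase x).card = U.card := by
          rw [Finset.card_erase_of_mem hxS, Finset.card_insert_of_notMem hcU]
          omega
        rw [symmDiff_card_disj hdisj', symmDiff_card_disj hdisj, hcard']
        omega

end Main

/-- One exchange move between connected `i`-subsets: `W'` is connected, has `i`
vertices, and differs from `W` by removing one vertex and adding one vertex. -/
def ExchMove {V : Type*} [Fintype V] [DecidableEq V] (T : SimpleGraph V) (i : ℕ)
    (W W' : Finset V) : Prop :=
  (T.induce (W' : Set V)).Connected ∧ W'.card = i ∧ (symmDiff W W').card = 2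

/-- Adjacent-exchange lemma: any connected `i`-subset with `1 ≤ i < |V|` admits an
exchange move, and any two connected `i`-subsets are joined by a sequence of
exchange moves through connected `i`-subsets. -/
theorem stmt_7 {V : Type*} [Fintype V] [DecidableEq V] (T : SimpleGraph V)
    (hT : T.IsTree) (i : ℕ) (hi1 : 1 ≤ i) (hi2 : i < Fintype.card V)
    (U : Finset V) (hUc : (T.induce (U : Set V)).Connected) (hUi : U.card = i) :
    (∃ U' : Finset V, (T.induce (U' : Set V)).Connected ∧ U'.card = i ∧
        (symmDiff U U').card = 2) ∧
    (∀ W : Finset V, (T.induce (W : Set V)).Connected → W.card = i →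
        Relation.ReflTransGen (ExchMove T i) U W) := by
  classical
  constructor
  · obtain ⟨u0, hu0⟩ := Finset.card_pos.mp (by omega : 0 < U.card)
    have hcompl : (Uᶜ : Finset V).Nonempty := by
      rw [← Finset.card_pos, Finset.card_compl]
      omega
    obtain ⟨w0, hw0⟩ := hcompl
    have hw0U : w0 ∉ U := by simpa using hw0
    obtain ⟨p⟩ := hT.isConnected.preconnected u0 w0
    obtain ⟨u, v, huU, hvU, -, hadj⟩ := crossing p hu0 hw0U
    have hS := insert_conn hUc huU hadj
    have hsafe : ∀ y ∈ insert v U, y ∉ U →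
        ∃ p : T.Walk y v, ∀ z ∈ p.support, z ∈ insert v U ∧ z ∉ U := by
      intro y hyS hyU
      rcases Finset.mem_insert.mp hyS with rfl | h
      · exact ⟨SimpleGraph.Walk.nil, fun z hz => by
          simp only [SimpleGraph.Walk.support_nil, List.mem_singleton] at hz
          subst hz; exact ⟨Finset.mem_insert_self _ _, hyU⟩⟩
      · exact absurd h hyU
    obtain ⟨x, hxU, hconn'⟩ := erase_conn hT hS (Finset.mem_insert_self v U)
      (Finset.subset_insert v U) ⟨u0, hu0⟩ hvU hsafe
    refine ⟨(insert v U).erase x, hconn', ?_, symmDiff_card_two hvU hxU⟩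
    rw [Finset.card_erase_of_mem (Finset.mem_insert_of_mem hxU),
      Finset.card_insert_of_notMem hvU, hUi]
    omega
  · intro W hWc hWi
    have hWne : W.Nonempty := Finset.card_pos.mp (by omega)
    have hUne : U.Nonempty := Finset.card_pos.mp (by omega)
    suffices H : ∀ n (A : Finset V), (T.induce (A : Set V)).Connected → A.card = i →
        A.Nonempty →
        sInf {m | ∃ a ∈ A, ∃ w ∈ W, T.dist a w = m} + (symmDiff A W).card ≤ n →
        Relation.ReflTransGen (ExchMove T i) A W by
      exact H _ U hUc hUi hUne le_rfl
    intro n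
    induction n with
    | zero =>
        intro A hAc hAi hAne hm
        have h0 : (symmDiff A W).card = 0 := by omega
        have hAW : A = W := symmDiff_eq_bot.mp (by
          rw [Finset.bot_eq_empty]
          exact Finset.card_eq_zero.mp h0)
        exact hAW ▸ Relation.ReflTransGen.refl
    | succ n ih =>
        intro A hAc hAi hAne hm
        by_cases hAW : A = W
        · exact hAW ▸ Relation.ReflTransGen.refl
        · obtain ⟨U', h1, h2, h3, h4⟩ := step_lemma hT hAc hAi hWc hWi hAne hWne hAW
          have hU'ne : U'.Nonempty := Finset.card_pos.mp (by omega)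
          refine Relation.ReflTransGen.head ?_ (ih U' h1 h2 hU'ne (by omega))
          show ExchMove T i A U'
          exact ⟨h1, h2, h3⟩
end

section
/- The min-ones array of a rooted subtree has unit steps: for a node v in a rooted binary tree with 0/1 labels, the array A_v (where A_v[i] is the minimum number of ones over connected subgraphs of T_v of size i containing v, for 1 ≤ i ≤ |T_v|) satisfies A_v[i+1] − A_v[i] ∈ {0, 1} for all 1 ≤ i < |T_v|, and analogously the maximum-ones array M_v satisfies M_v[i+1] − M_v[i] ∈ {0, 1}. -/
/-- Rooted binary trees with `Bool` labels; `nil` is the empty tree. -/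
inductive BTree where
  | nil : BTree
  | node : Bool → BTree → BTree → BTree

namespace BTree

/-- Number of nodes. -/
def size : BTree → ℕ
  | nil => 0
  | node _ l r => 1 + l.size + r.size

/-- Number of nodes labeled `true` (i.e. 1). -/
def onesB : BTree → ℕ
  | nil => 0
  | node b l r => (if b then 1 else 0) + l.onesB + r.onesB

/-- `Pruned t s` means `s` is obtained from `t` by pruning: `s` is either empty or
keeps the root of `t` together with pruned subtrees of the two children.  Nonempty
pruned subtrees of `t` correspond exactly to the connected subgraphs of `t`
containing the root of `t`. -/
def Pruned : BTree → BTree → Prop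
  | nil, s => s = nil
  | node b l r, s => s = nil ∨ ∃ l' r', s = node b l' r' ∧ Pruned l l' ∧ Pruned r r'

/-- `minOnes t i` : minimum number of 1-labeled nodes over all connected subgraphs of
`t` containing the root of `t` and having exactly `i` nodes; `⊤` if none exists. -/
noncomputable def minOnes (t : BTree) (i : ℕ) : ℕ∞ :=
  sInf {m : ℕ∞ | ∃ s, Pruned t s ∧ s ≠ nil ∧ s.size = i ∧ m = (s.onesB : ℕ∞)}

end BTree

namespace BTree

/-- `maxOnes t i` : maximum number of 1-labeled nodes over all connected subgraphs of
`t` containing the root of `t` and having exactly `i` nodes. -/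
noncomputable def maxOnes (t : BTree) (i : ℕ) : ℕ∞ :=
  sSup {m : ℕ∞ | ∃ s, Pruned t s ∧ s ≠ nil ∧ s.size = i ∧ m = (s.onesB : ℕ∞)}

end BTree

namespace BTree

lemma pruned_nil (t : BTree) : Pruned t nil := by
  cases t <;> simp [Pruned]

lemma pruned_refl : ∀ t : BTree, Pruned t t := by
  intro t
  induction t with
  | nil => rfl
  | node b l r ihl ihr => exact Or.inr ⟨l, r, rfl, ihl, ihr⟩

lemma pruned_size_le : ∀ t s, Pruned t s → s.size ≤ t.size := by
  intro t
  induction t with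
  | nil => intro s h; cases h; simp
  | node b l r ihl ihr =>
    intro s h
    rcases h with rfl | ⟨l', r', rfl, hl, hr⟩
    · simp [size]
    · simp only [size]
      have := ihl l' hl; have := ihr r' hr; omega

lemma pruned_trans : ∀ t s u, Pruned t s → Pruned s u → Pruned t u := by
  intro t
  induction t with
  | nil => intro s u h1 h2; cases h1; exact h2
  | node b l r ihl ihr =>
    intro s u h1 h2
    rcases h1 with rfl | ⟨l', r', rfl, hl, hr⟩
    · cases h2; exact pruned_nil _
    · rcases h2 with rfl | ⟨l'', r'', rfl, hl', hr'⟩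
      · exact Or.inl rfl
      · exact Or.inr ⟨l'', r'', rfl, ihl _ _ hl hl', ihr _ _ hr hr'⟩

lemma size_pos_of_ne_nil {s : BTree} (h : s ≠ nil) : 1 ≤ s.size := by
  cases s with
  | nil => exact absurd rfl h
  | node b l r => simp [size]; omega

lemma onesB_le_size : ∀ s : BTree, s.onesB ≤ s.size := by
  intro s
  induction s with
  | nil => simp [onesB, size]
  | node b l r ihl ihr => simp only [onesB, size]; split <;> omega

/-- Shrink: remove one leaf from a nonempty tree of size ≥ 2. -/
lemma shrink : ∀ s : BTree, s ≠ nil → 2 ≤ s.size →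
    ∃ s', Pruned s s' ∧ s' ≠ nil ∧ s'.size + 1 = s.size ∧
      s'.onesB ≤ s.onesB ∧ s.onesB ≤ s'.onesB + 1 := by
  intro s
  induction s with
  | nil => intro h; exact absurd rfl h
  | node b l r ihl ihr =>
    intro _ hsz
    by_cases hl : l = nil
    · subst hl
      have hr : r ≠ nil := by
        intro h; subst h; simp [size] at hsz
      by_cases hr2 : 2 ≤ r.size
      · obtain ⟨r', hpr, hne, hsz', ho1, ho2⟩ := ihr hr hr2
        refine ⟨node b nil r', Or.inr ⟨nil, r', rfl, rfl, hpr⟩, by simp, ?_, ?_, ?_⟩ <;>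
          simp only [size, onesB] at * <;> omega
      · have h1 : r.size = 1 := by have := size_pos_of_ne_nil hr; omega
        have h2 : r.onesB ≤ 1 := h1 ▸ onesB_le_size r
        refine ⟨node b nil nil, Or.inr ⟨nil, nil, rfl, rfl, pruned_nil r⟩, by simp, ?_, ?_, ?_⟩ <;>
          simp only [size, onesB] at * <;> omega
    · by_cases hl2 : 2 ≤ l.size
      · obtain ⟨l', hpl, hne, hsz', ho1, ho2⟩ := ihl hl hl2
        refine ⟨node b l' r, Or.inr ⟨l', r, rfl, hpl, pruned_refl r⟩, by simp, ?_, ?_, ?_⟩ <;>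
          simp only [size, onesB] at * <;> omega
      · have h1 : l.size = 1 := by have := size_pos_of_ne_nil hl; omega
        have h2 : l.onesB ≤ 1 := h1 ▸ onesB_le_size l
        refine ⟨node b nil r, Or.inr ⟨nil, r, rfl, pruned_nil l, pruned_refl r⟩, by simp, ?_, ?_, ?_⟩ <;>
          simp only [size, onesB] at * <;> omega

/-- Grow: add one node to a nonempty pruned subtree that is not the whole tree. -/
lemma grow : ∀ t s : BTree, Pruned t s → s ≠ nil → s.size < t.size →
    ∃ s', Pruned t s' ∧ s' ≠ nil ∧ s'.size = s.size + 1 ∧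
      s.onesB ≤ s'.onesB ∧ s'.onesB ≤ s.onesB + 1 := by
  intro t
  induction t with
  | nil => intro s h; cases h; simp [size]
  | node b l r ihl ihr =>
    intro s hp hne hsz
    rcases hp with rfl | ⟨l', r', rfl, hl, hr⟩
    · exact absurd rfl hne
    · simp only [size] at hsz
      have hll := pruned_size_le l l' hl
      have hrr := pruned_size_le r r' hr
      by_cases hc : l'.size < l.size
      · by_cases hln : l' = nil
        · subst hln
          -- insert the root of l
          cases l with
          | nil => simp [size] at hc
          | node b0 l1 l2 =>
            refine ⟨node b (node b0 nil nil) r',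
              Or.inr ⟨_, _, rfl, Or.inr ⟨nil, nil, rfl, pruned_nil _, pruned_nil _⟩, hr⟩,
              by simp, ?_, ?_, ?_⟩ <;>
              cases b <;> cases b0 <;> simp [size, onesB] <;> omega
        · obtain ⟨l'', hpl, hne', hsz', ho1, ho2⟩ := ihl l' hl hln hc
          refine ⟨node b l'' r', Or.inr ⟨l'', r', rfl, hpl, hr⟩, by simp, ?_, ?_, ?_⟩ <;>
            simp only [size, onesB] <;> omega
      · have hc' : r'.size < r.size := by omega
        by_cases hrn : r' = nil
        · subst hrn
          cases r with
          | nil => simp [size] at hc'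
          | node b0 r1 r2 =>
            refine ⟨node b l' (node b0 nil nil),
              Or.inr ⟨_, _, rfl, hl, Or.inr ⟨nil, nil, rfl, pruned_nil _, pruned_nil _⟩⟩,
              by simp, ?_, ?_, ?_⟩ <;>
              cases b <;> cases b0 <;> simp [size, onesB] <;> omega
        · obtain ⟨r'', hpr, hne', hsz', ho1, ho2⟩ := ihr r' hr hrn hc'
          refine ⟨node b l' r'', Or.inr ⟨l', r'', rfl, hl, hpr⟩, by simp, ?_, ?_, ?_⟩ <;>
            simp only [size, onesB] <;> omega

/-- Existence of a pruned subtree of any size from 1 to `t.size`. -/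
lemma exists_pruned (t : BTree) : ∀ i, 1 ≤ i → i ≤ t.size →
    ∃ s, Pruned t s ∧ s ≠ nil ∧ s.size = i := by
  intro i
  induction i with
  | zero => omega
  | succ n ih =>
    intro _ h2
    by_cases hn : n = 0
    · subst hn
      cases t with
      | nil => simp [size] at h2
      | node b l r =>
        exact ⟨node b nil nil, Or.inr ⟨nil, nil, rfl, pruned_nil _, pruned_nil _⟩,
          by simp, by simp [size]⟩
    · obtain ⟨s, hp, hne, hsz⟩ := ih (by omega) (by omega)
      obtain ⟨s', hp', hne', hsz', _, _⟩ := grow t s hp hne (by omega)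
      exact ⟨s', hp', hne', by omega⟩

end BTree

open BTree in
/-- The min-ones and max-ones arrays of a rooted subtree have unit steps. -/
theorem stmt_11 (t : BTree) (ht : t ≠ BTree.nil) (i : ℕ) (h1 : 1 ≤ i)
    (h2 : i < t.size) :
    (minOnes t (i + 1) = minOnes t i ∨ minOnes t (i + 1) = minOnes t i + 1) ∧
    (maxOnes t (i + 1) = maxOnes t i ∨ maxOnes t (i + 1) = maxOnes t i + 1) := by
  set S : ℕ → Set ℕ∞ :=
    fun j => {m : ℕ∞ | ∃ s, Pruned t s ∧ s ≠ nil ∧ s.size = j ∧ m = (s.onesB : ℕ∞)} with hS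
  have hSne : ∀ j, 1 ≤ j → j ≤ t.size → (S j).Nonempty := by
    intro j hj1 hj2
    obtain ⟨s, hp, hne, hsz⟩ := exists_pruned t j hj1 hj2
    exact ⟨_, s, hp, hne, hsz, rfl⟩
  have hbd : ∀ j, ∀ m ∈ S j, m ≤ (j : ℕ∞) := by
    rintro j m ⟨s, hp, hne, rfl, rfl⟩
    exact_mod_cast onesB_le_size s
  -- shrink step: each element of S (j+1) dominates some element of S j within 1
  have hshrink : ∀ j, 1 ≤ j → ∀ m ∈ S (j + 1),
      ∃ m' ∈ S j, m' ≤ m ∧ m ≤ m' + 1 := by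
    rintro j hj m ⟨s, hp, hne, hsz, rfl⟩
    obtain ⟨s', hp', hne', hsz', ho1, ho2⟩ := shrink s hne (by omega)
    refine ⟨(s'.onesB : ℕ∞), ⟨s', pruned_trans t s s' hp hp', hne', by omega, rfl⟩,
      by exact_mod_cast ho1, by exact_mod_cast ho2⟩
  have hgrow : ∀ j, j < t.size → ∀ m ∈ S j,
      ∃ m' ∈ S (j + 1), m ≤ m' ∧ m' ≤ m + 1 := by
    rintro j hj m ⟨s, hp, hne, hsz, rfl⟩
    obtain ⟨s', hp', hne', hsz', ho1, ho2⟩ := grow t s hp hne (by omega)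
    exact ⟨(s'.onesB : ℕ∞), ⟨s', hp', hne', by omega, rfl⟩,
      by exact_mod_cast ho1, by exact_mod_cast ho2⟩
  constructor
  · -- min
    have h2' : i + 1 ≤ t.size := h2
    -- sInf S i is attained
    obtain ⟨m, hm, hmin⟩ := wellFounded_lt.has_min (S i) (hSne i h1 (by omega))
    have hmle : ∀ x ∈ S i, m ≤ x := fun x hx => not_lt.mp (hmin x hx)
    have hinf : minOnes t i = m := le_antisymm (sInf_le hm) (le_sInf hmle)
    have hfin : m ≠ ⊤ := by
      intro h; have := hbd i m hm; rw [h] at this; simp at this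
    have hup : minOnes t (i + 1) ≤ m + 1 := by
      obtain ⟨m', hm', h1', h2''⟩ := hgrow i h2 m hm
      exact le_trans (sInf_le hm') h2''
    have hlo : m ≤ minOnes t (i + 1) := by
      apply le_sInf
      intro x hx
      obtain ⟨m', hm', h1', _⟩ := hshrink i h1 x hx
      exact le_trans (hmle m' hm') h1'
    rw [hinf]
    lift m to ℕ using hfin
    have hne2 : minOnes t (i+1) ≠ ⊤ := by
      intro h; rw [h] at hup
      exact ENat.coe_ne_top (m+1) (by exact_mod_cast top_le_iff.mp hup)
    lift minOnes t (i+1) to ℕ using hne2 with v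
    rw [show ((m : ℕ∞) + 1) = ((m + 1 : ℕ) : ℕ∞) by push_cast; ring] at hup ⊢
    norm_cast at hlo hup ⊢
    omega
  · -- max
    have hub : ∀ x ∈ S (i+1), x ≤ maxOnes t i + 1 := by
      intro x hx
      obtain ⟨m', hm', h1', h2''⟩ := hshrink i h1 x hx
      exact le_trans h2'' (add_le_add (le_sSup hm') le_rfl)
    have hup : maxOnes t (i+1) ≤ maxOnes t i + 1 := sSup_le hub
    have hlo : maxOnes t i ≤ maxOnes t (i+1) := by
      apply sSup_le
      intro x hx
      obtain ⟨m', hm', h1', _⟩ := hgrow i h2 x hx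
      exact le_trans h1' (le_sSup hm')
    have hfin : maxOnes t i ≠ ⊤ := by
      intro h
      have : (⊤ : ℕ∞) ≤ (i : ℕ∞) := h ▸ sSup_le (hbd i)
      exact ENat.coe_ne_top i (top_le_iff.mp this)
    lift maxOnes t i to ℕ using hfin with a
    have hfin2 : maxOnes t (i+1) ≠ ⊤ := by
      intro h; rw [h] at hup
      exact ENat.coe_ne_top (a+1) (by exact_mod_cast top_le_iff.mp hup)
    lift maxOnes t (i+1) to ℕ using hfin2 with b
    rw [show ((a : ℕ∞) + 1) = ((a + 1 : ℕ) : ℕ∞) by push_cast; ring] at hup ⊢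
    norm_cast at hlo hup ⊢
    omega
end

section
/- Combining two subtree arrays via a string reduction: let X : Fin (x+1) → ℕ and Y : Fin (y+1) → ℕ be functions with X[0] = Y[0] = 0 and unit steps (consecutive differences in {0,1}), and let c ∈ {0,1}. Define F : Fin (x+y+2) → ℕ∞ for 1 ≤ i ≤ x+y+1 by F[i] = c + min over j+k = i−1, 0 ≤ j ≤ x, 0 ≤ k ≤ y of (X[j] + Y[k]). Then F[i] equals the minimum over all substrings of the binary string S = rev(ΔX) · c · ΔY of length i that contain the middle position c of the number of ones in that substring, where ΔX, ΔY are the unit-step difference bit-strings of X and Y. -/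
/-- The string `S = rev(ΔX) · c · ΔY` built from the unit-step difference bit-strings
of `X` (length `x`) and `Y` (length `y`), with the bit `c` at position `x`. -/
def combineStr (x : ℕ) (X Y : ℕ → ℕ) (c : Bool) : ℕ → Bool := fun t =>
  if t < x then decide (X (x - t) = X (x - t - 1) + 1)
  else if t = x then c
  else decide (Y (t - x) = Y (t - x - 1) + 1)

private lemma add_sInf_ENat (d : ℕ∞) (s : Set ℕ∞) (hs : s.Nonempty) :
    d + sInf s = sInf ((fun m => d + m) '' s) := by
  apply le_antisymm
  · exact le_sInf (by rintro b ⟨m, hm, rfl⟩; exact add_le_add (le_refl d) (sInf_le hm))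
  · exact sInf_le ⟨sInf s, csInf_mem hs, rfl⟩

/-- Combining two unit-step subtree arrays via the string reduction: for
`1 ≤ i ≤ x + y + 1`, `c + min_{j+k=i-1, j≤x, k≤y} (X j + Y k)` equals the minimum
ones-count over length-`i` windows of `rev(ΔX)·c·ΔY` containing position `x`. -/
theorem stmt_12 (x y : ℕ) (X Y : ℕ → ℕ) (c : Bool)
    (hX0 : X 0 = 0) (hY0 : Y 0 = 0)
    (hXstep : ∀ j < x, X (j + 1) = X j ∨ X (j + 1) = X j + 1)
    (hYstep : ∀ k < y, Y (k + 1) = Y k ∨ Y (k + 1) = Y k + 1)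
    (i : ℕ) (h1 : 1 ≤ i) (h2 : i ≤ x + y + 1) :
    ((if c then 1 else 0) : ℕ∞)
        + sInf {m : ℕ∞ | ∃ j k, j + k + 1 = i ∧ j ≤ x ∧ k ≤ y ∧ m = ((X j + Y k : ℕ) : ℕ∞)}
      = sInf {m : ℕ∞ | ∃ p, p ≤ x ∧ x < p + i ∧ p + i ≤ x + 1 + y ∧
          m = ((ones (combineStr x X Y c) p i : ℕ) : ℕ∞)} := by
  set S := combineStr x X Y c with hS
  set f : ℕ → ℕ := fun t => if S t = true then 1 else 0 with hf
  -- count of ones in the left (reversed ΔX) part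
  have countL : ∀ n, n ≤ x → (∑ t ∈ Finset.Ico (x - n) x, f t) = X n := by
    intro n
    induction n with
    | zero => intro _; simp [hX0]
    | succ n ih =>
      intro hn
      have ha : x - (n + 1) < x := by omega
      rw [Finset.sum_eq_sum_Ico_succ_bot ha f]
      have h1' : x - (n + 1) + 1 = x - n := by omega
      rw [h1', ih (by omega)]
      have hfa : f (x - (n + 1)) = if X (n + 1) = X n + 1 then 1 else 0 := by
        have hx1 : x - (x - (n + 1)) = n + 1 := by omega
        have hx2 : x - (x - (n + 1)) - 1 = n := by omega
        simp only [hf, hS, combineStr, if_pos ha, hx1, hx2]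
        by_cases h : X (n + 1) = X n + 1 <;> simp [h]
      rcases hXstep n (by omega) with h | h
      · rw [hfa, if_neg (by omega), h]; omega
      · rw [hfa, if_pos h, h]; omega
  -- count of ones in the right (ΔY) part
  have countR : ∀ k, k ≤ y → (∑ t ∈ Finset.Ico (x + 1) (x + 1 + k), f t) = Y k := by
    intro k
    induction k with
    | zero => intro _; simp [hY0]
    | succ k ih =>
      intro hk
      have : x + 1 + (k + 1) = (x + 1 + k) + 1 := by omega
      rw [this, Finset.sum_Ico_succ_top (by omega) f, ih (by omega)]
      have hfa : f (x + 1 + k) = if Y (k + 1) = Y k + 1 then 1 else 0 := by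
        have h1' : ¬ (x + 1 + k < x) := by omega
        have h2' : ¬ (x + 1 + k = x) := by omega
        have h3' : x + 1 + k - x = k + 1 := by omega
        have h4' : x + 1 + k - x - 1 = k := by omega
        simp only [hf, hS, combineStr, if_neg h1', if_neg h2', h3', h4']
        by_cases h : Y (k + 1) = Y k + 1 <;> simp [h]
      rcases hYstep k (by omega) with h | h
      · rw [hfa, if_neg (by omega), h]; omega
      · rw [hfa, if_pos h, h]
  -- value of a window
  have hones : ∀ p, p ≤ x → x < p + i → p + i ≤ x + 1 + y →
      ones S p i = Bool.toNat c + (X (x - p) + Y (p + i - 1 - x)) := by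
    intro p hp1 hp2 hp3
    have : ones S p i = ∑ t ∈ Finset.Ico p (p + i), f t := Finset.card_filter _ _
    rw [this, ← Finset.sum_Ico_consecutive f (show p ≤ x by omega) (show x ≤ p + i by omega),
      Finset.sum_eq_sum_Ico_succ_bot (show x < p + i by omega) f]
    have hfx : f x = Bool.toNat c := by
      simp only [hf, hS, combineStr, if_neg (lt_irrefl x), if_pos rfl]
      cases c <;> simp
    have hL : (∑ t ∈ Finset.Ico p x, f t) = X (x - p) := by
      have h' := countL (x - p) (by omega)
      have e : x - (x - p) = p := by omega
      rw [e] at h'; exact h'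
    have hR : (∑ t ∈ Finset.Ico (x + 1) (p + i), f t) = Y (p + i - 1 - x) := by
      have h' := countR (p + i - 1 - x) (by omega)
      have e : x + 1 + (p + i - 1 - x) = p + i := by omega
      rw [e] at h'; exact h'
    rw [hfx, hL, hR]; omega
  -- the two index sets correspond
  have hset : {m : ℕ∞ | ∃ p, p ≤ x ∧ x < p + i ∧ p + i ≤ x + 1 + y ∧
          m = ((ones S p i : ℕ) : ℕ∞)}
      = (fun m => ((Bool.toNat c : ℕ) : ℕ∞) + m) ''
        {m : ℕ∞ | ∃ j k, j + k + 1 = i ∧ j ≤ x ∧ k ≤ y ∧ m = ((X j + Y k : ℕ) : ℕ∞)} := by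
    ext m
    constructor
    · rintro ⟨p, hp1, hp2, hp3, rfl⟩
      refine ⟨((X (x - p) + Y (p + i - 1 - x) : ℕ) : ℕ∞),
        ⟨x - p, p + i - 1 - x, by omega, by omega, by omega, rfl⟩, ?_⟩
      rw [hones p hp1 hp2 hp3]
      push_cast
      ring
    · rintro ⟨m, ⟨j, k, hjk, hj, hk, rfl⟩, rfl⟩
      refine ⟨x - j, by omega, by omega, by omega, ?_⟩
      rw [hones (x - j) (by omega) (by omega) (by omega)]
      have e1 : x - (x - j) = j := by omega
      have e2 : x - j + i - 1 - x = k := by omega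
      rw [e1, e2]
      push_cast
      ring
  have hne : {m : ℕ∞ | ∃ j k, j + k + 1 = i ∧ j ≤ x ∧ k ≤ y ∧
      m = ((X j + Y k : ℕ) : ℕ∞)}.Nonempty :=
    ⟨_, min x (i - 1), i - 1 - min x (i - 1), by omega, by omega, by omega, rfl⟩
  rw [hset, ← add_sInf_ENat _ _ hne]
  congr 1
  cases c <;> simp
end
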